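/- arXiv:1809.00828 — 2 statements merged into one kernel-verified Lean document; each statement's English description precedes it below -/
import Mathlib

section
/- Additive-Schwarz lemma: Let A be an n×n real symmetric positive definite matrix, 𝓑 a finite collection of index sets covering {1,...,n}, A_B = R_B A R_Bᵀ, and S = Σ_{B∈𝓑} R_Bᵀ A_B⁻¹ R_B. Then for every vector v ∈ ℝⁿ, vᵀ S⁻¹ v = min { Σ_{B∈𝓑} v_Bᵀ A_B v_B : (v_B)_{B∈𝓑} with Σ_{B∈𝓑} R_Bᵀ v_B = v }. -/
open scoped Matrix

/-- The restriction matrix `R_B` whose rows are the standard basis vectors indexed by `B`. -/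
def restr {n : ℕ} (B : Finset (Fin n)) : Matrix {i // i ∈ B} (Fin n) ℝ :=
  Matrix.of fun b j => if (b : Fin n) = j then 1 else 0

namespace AddSchwarz

lemma restr_mulVec {n : ℕ} (B : Finset (Fin n)) (x : Fin n → ℝ) (b : {i // i ∈ B}) :
    (restr B *ᵥ x) b = x b := by
  simp [restr, Matrix.mulVec, dotProduct]

lemma restrT_mulVec {n : ℕ} (B : Finset (Fin n)) (x : {i // i ∈ B} → ℝ) (j : Fin n) :
    ((restr B)ᵀ *ᵥ x) j = if h : j ∈ B then x ⟨j, h⟩ else 0 := by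
  simp only [Matrix.mulVec, dotProduct, Matrix.transpose_apply, restr, Matrix.of_apply,
    ite_mul, one_mul, zero_mul]
  by_cases h : j ∈ B
  · rw [dif_pos h, Finset.sum_eq_single (⟨j, h⟩ : {i // i ∈ B})]
    · simp
    · intro b _ hb
      rw [if_neg (fun e => hb (Subtype.ext e))]
    · simp
  · rw [dif_neg h, Finset.sum_eq_zero]
    intro b _
    rw [if_neg]
    intro e
    exact h (e ▸ b.2)

lemma restrT_inj {n : ℕ} (B : Finset (Fin n)) {x : {i // i ∈ B} → ℝ}
    (h : (restr B)ᵀ *ᵥ x = 0) : x = 0 := by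
  funext b
  have := congrFun h (b : Fin n)
  rw [restrT_mulVec, dif_pos b.2] at this
  simpa using this

lemma conjT_eq_T {m k : Type*} (M : Matrix m k ℝ) : Mᴴ = Mᵀ := rfl

lemma AB_posDef {n : ℕ} {A : Matrix (Fin n) (Fin n) ℝ} (hA : A.PosDef)
    (B : Finset (Fin n)) : (restr B * A * (restr B)ᵀ).PosDef := by
  refine Matrix.PosDef.of_dotProduct_mulVec_pos ?_ ?_
  · rw [← conjT_eq_T]
    exact Matrix.isHermitian_mul_mul_conjTranspose _ hA.isHermitian
  · intro x hx
    have hy : (restr B)ᵀ *ᵥ x ≠ 0 := fun h0 => hx (restrT_inj B h0)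
    have hpos := hA.dotProduct_mulVec_pos hy
    rw [star_trivial] at hpos ⊢
    rw [show (restr B * A * (restr B)ᵀ) *ᵥ x = restr B *ᵥ (A *ᵥ ((restr B)ᵀ *ᵥ x)) from by
          rw [Matrix.mulVec_mulVec, Matrix.mulVec_mulVec],
        Matrix.dotProduct_mulVec, ← Matrix.mulVec_transpose]
    exact hpos

lemma sum_mulVec {n m : ℕ} {ι : Type*} (s : Finset ι) (f : ι → Matrix (Fin m) (Fin n) ℝ)
    (x : Fin n → ℝ) : (∑ i ∈ s, f i) *ᵥ x = ∑ i ∈ s, f i *ᵥ x := by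
  classical
  induction s using Finset.induction with
  | empty => simp [Matrix.mulVec]
  | insert _ _ h ih => rw [Finset.sum_insert h, Finset.sum_insert h, Matrix.add_mulVec, ih]

lemma sum_dotProduct {n : ℕ} {ι : Type*} (s : Finset ι) (f : ι → (Fin n → ℝ))
    (x : Fin n → ℝ) : (∑ i ∈ s, f i) ⬝ᵥ x = ∑ i ∈ s, f i ⬝ᵥ x := by
  classical
  induction s using Finset.induction with
  | empty => simp
  | insert _ _ h ih => rw [Finset.sum_insert h, Finset.sum_insert h, add_dotProduct, ih]

lemma dotProduct_sum {n : ℕ} {ι : Type*} (s : Finset ι) (x : Fin n → ℝ)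
    (f : ι → (Fin n → ℝ)) : x ⬝ᵥ (∑ i ∈ s, f i) = ∑ i ∈ s, x ⬝ᵥ f i := by
  classical
  induction s using Finset.induction with
  | empty => simp
  | insert _ _ h ih => rw [Finset.sum_insert h, Finset.sum_insert h, dotProduct_add, ih]

lemma transpose_mulVec_dotProduct {m k : Type*} [Fintype m] [Fintype k]
    (M : Matrix m k ℝ) (y : m → ℝ) (x : k → ℝ) :
    (Mᵀ *ᵥ y) ⬝ᵥ x = y ⬝ᵥ (M *ᵥ x) := by
  rw [Matrix.mulVec_transpose, ← Matrix.dotProduct_mulVec]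

lemma sym_dot {m : Type*} [Fintype m] (M : Matrix m m ℝ) (hM : Mᵀ = M)
    (x y : m → ℝ) : x ⬝ᵥ (M *ᵥ y) = y ⬝ᵥ (M *ᵥ x) := by
  rw [dotProduct_comm, ← hM, transpose_mulVec_dotProduct, hM]

lemma S_posDef {n : ℕ} {A : Matrix (Fin n) (Fin n) ℝ} (hA : A.PosDef)
    (𝓑 : Finset (Finset (Fin n))) (hcov : ∀ i : Fin n, ∃ B ∈ 𝓑, i ∈ B) :
    (∑ B ∈ 𝓑, (restr B)ᵀ * (restr B * A * (restr B)ᵀ)⁻¹ * restr B).PosDef := by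
  have hterm : ∀ (B : Finset (Fin n)) (x : Fin n → ℝ),
      x ⬝ᵥ (((restr B)ᵀ * (restr B * A * (restr B)ᵀ)⁻¹ * restr B) *ᵥ x)
      = (restr B *ᵥ x) ⬝ᵥ ((restr B * A * (restr B)ᵀ)⁻¹ *ᵥ (restr B *ᵥ x)) := by
    intro B x
    rw [show ((restr B)ᵀ * (restr B * A * (restr B)ᵀ)⁻¹ * restr B) *ᵥ x
          = (restr B)ᵀ *ᵥ ((restr B * A * (restr B)ᵀ)⁻¹ *ᵥ (restr B *ᵥ x)) from by
        rw [Matrix.mulVec_mulVec, Matrix.mulVec_mulVec],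
      dotProduct_comm, transpose_mulVec_dotProduct, dotProduct_comm]
  refine Matrix.PosDef.of_dotProduct_mulVec_pos ?_ ?_
  · show _ᴴ = _
    rw [Matrix.conjTranspose_sum]
    refine Finset.sum_congr rfl fun B _ => ?_
    rw [show (restr B : Matrix _ _ ℝ)ᵀ = (restr B)ᴴ from rfl]
    exact Matrix.isHermitian_conjTranspose_mul_mul _ ((AB_posDef hA B).inv).isHermitian
  · intro x hx
    rw [star_trivial, sum_mulVec, dotProduct_sum]
    obtain ⟨i, hi⟩ := Function.ne_iff.mp hx
    obtain ⟨B₀, hB₀, hiB₀⟩ := hcov i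
    refine Finset.sum_pos' (fun B _ => ?_) ⟨B₀, hB₀, ?_⟩
    · rw [hterm B x]
      have := ((AB_posDef hA B).inv).posSemidef.dotProduct_mulVec_nonneg (restr B *ᵥ x)
      rwa [star_trivial] at this
    · rw [hterm B₀ x]
      have hy : restr B₀ *ᵥ x ≠ 0 := by
        intro h0
        have := congrFun h0 ⟨i, hiB₀⟩
        rw [restr_mulVec] at this
        exact hi this
      have := ((AB_posDef hA B₀).inv).dotProduct_mulVec_pos hy
      rwa [star_trivial] at this

end AddSchwarz

open AddSchwarz

/-- Additive-Schwarz lemma: `vᵀ S⁻¹ v` is the minimum of `Σ_B v_Bᵀ A_B v_B` over all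
decompositions `v = Σ_B R_Bᵀ v_B`. -/
theorem stmt_4 {n : ℕ} (A : Matrix (Fin n) (Fin n) ℝ) (hA : A.PosDef)
    (𝓑 : Finset (Finset (Fin n))) (hcov : ∀ i : Fin n, ∃ B ∈ 𝓑, i ∈ B)
    (v : Fin n → ℝ) :
    IsLeast {r : ℝ | ∃ w : (B : Finset (Fin n)) → ({i // i ∈ B} → ℝ),
        (∑ B ∈ 𝓑, (restr B)ᵀ *ᵥ w B) = v ∧
        r = ∑ B ∈ 𝓑, w B ⬝ᵥ ((restr B * A * (restr B)ᵀ) *ᵥ w B)}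
      (v ⬝ᵥ ((∑ B ∈ 𝓑, (restr B)ᵀ * (restr B * A * (restr B)ᵀ)⁻¹ * restr B)⁻¹ *ᵥ v)) := by
  classical
  set S := ∑ B ∈ 𝓑, (restr B)ᵀ * (restr B * A * (restr B)ᵀ)⁻¹ * restr B with hSdef
  have hS := S_posDef hA 𝓑 hcov
  have hdet : IsUnit S.det := hS.det_pos.ne'.isUnit
  clear_value S
  set u := S⁻¹ *ᵥ v with hu
  clear_value u
  have hSu : S *ᵥ u = v := by
    rw [hu, Matrix.mulVec_mulVec, Matrix.mul_nonsing_inv _ hdet, Matrix.one_mulVec]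
  set w0 : (B : Finset (Fin n)) → ({i // i ∈ B} → ℝ) :=
    fun B => (restr B * A * (restr B)ᵀ)⁻¹ *ᵥ (restr B *ᵥ u) with hw0
  clear_value w0
  have hABw0 : ∀ B : Finset (Fin n),
      (restr B * A * (restr B)ᵀ) *ᵥ w0 B = restr B *ᵥ u := by
    intro B
    rw [hw0, Matrix.mulVec_mulVec,
      Matrix.mul_nonsing_inv _ (AB_posDef hA B).det_pos.ne'.isUnit, Matrix.one_mulVec]
  have hdecomp : (∑ B ∈ 𝓑, (restr B)ᵀ *ᵥ w0 B) = v := by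
    calc ∑ B ∈ 𝓑, (restr B)ᵀ *ᵥ w0 B
        = ∑ B ∈ 𝓑, ((restr B)ᵀ * (restr B * A * (restr B)ᵀ)⁻¹ * restr B) *ᵥ u := by
          refine Finset.sum_congr rfl fun B _ => ?_
          rw [hw0, Matrix.mulVec_mulVec, Matrix.mulVec_mulVec]
      _ = S *ᵥ u := by rw [hSdef, sum_mulVec]
      _ = v := hSu
  have hval : v ⬝ᵥ u = ∑ B ∈ 𝓑, w0 B ⬝ᵥ ((restr B * A * (restr B)ᵀ) *ᵥ w0 B) := by
    conv_lhs => rw [← hSu]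
    rw [hSdef, sum_mulVec, sum_dotProduct]
    refine Finset.sum_congr rfl fun B _ => ?_
    rw [hABw0 B, show ((restr B)ᵀ * (restr B * A * (restr B)ᵀ)⁻¹ * restr B) *ᵥ u
          = (restr B)ᵀ *ᵥ w0 B from by
        rw [show w0 B = (restr B * A * (restr B)ᵀ)⁻¹ *ᵥ (restr B *ᵥ u) from by rw [hw0],
          Matrix.mulVec_mulVec, Matrix.mulVec_mulVec],
      transpose_mulVec_dotProduct]
  constructor
  · exact ⟨w0, hdecomp, hval⟩
  · rintro r ⟨w, hw, rfl⟩
    set d : (B : Finset (Fin n)) → ({i // i ∈ B} → ℝ) := fun B => w B - w0 B with hd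
    clear_value d
    have hterm : ∀ B ∈ 𝓑, w B ⬝ᵥ ((restr B * A * (restr B)ᵀ) *ᵥ w B)
        = w0 B ⬝ᵥ ((restr B * A * (restr B)ᵀ) *ᵥ w0 B)
          + 2 * (((restr B)ᵀ *ᵥ d B) ⬝ᵥ u)
          + d B ⬝ᵥ ((restr B * A * (restr B)ᵀ) *ᵥ d B) := by
      intro B _
      have hsym : (restr B * A * (restr B)ᵀ)ᵀ = restr B * A * (restr B)ᵀ :=
        (AB_posDef hA B).isHermitian
      have hwB : w B = w0 B + d B := by
        rw [hd]; funext b; simp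
      have cross : w0 B ⬝ᵥ ((restr B * A * (restr B)ᵀ) *ᵥ d B)
          = ((restr B)ᵀ *ᵥ d B) ⬝ᵥ u := by
        rw [sym_dot _ hsym, hABw0 B, transpose_mulVec_dotProduct]
      have cross2 : d B ⬝ᵥ ((restr B * A * (restr B)ᵀ) *ᵥ w0 B)
          = ((restr B)ᵀ *ᵥ d B) ⬝ᵥ u := by
        rw [hABw0 B, transpose_mulVec_dotProduct]
      rw [hwB, Matrix.mulVec_add, dotProduct_add, add_dotProduct,
        add_dotProduct, cross, cross2]
      ring
    have hzero : ∑ B ∈ 𝓑, ((restr B)ᵀ *ᵥ d B) ⬝ᵥ u = 0 := by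
      rw [← AddSchwarz.sum_dotProduct 𝓑 (fun B => (restr B)ᵀ *ᵥ d B) u]
      have h0 : ∑ B ∈ 𝓑, (restr B)ᵀ *ᵥ d B = 0 := by
        rw [Finset.sum_congr rfl (fun B _ => show (restr B)ᵀ *ᵥ d B
              = (restr B)ᵀ *ᵥ w B - (restr B)ᵀ *ᵥ w0 B from by
            rw [show d B = w B - w0 B from by rw [hd], Matrix.mulVec_sub]),
          Finset.sum_sub_distrib, hw, hdecomp, sub_self]
      rw [h0, zero_dotProduct]
    rw [Finset.sum_congr rfl hterm, Finset.sum_add_distrib, Finset.sum_add_distrib,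
      ← Finset.mul_sum, hzero, mul_zero, add_zero, ← hval]
    refine le_add_of_nonneg_right (Finset.sum_nonneg fun B _ => ?_)
    have := (AB_posDef hA B).posSemidef.dotProduct_mulVec_nonneg (d B)
    rwa [star_trivial] at this
end

section
/- Let A be SPD and S the Additive-Schwarz operator for blocks 𝓑 covering {1,...,n}. If the index k belongs to exactly n_k of the blocks in 𝓑, then the Rayleigh quotient of the standard basis vector e_k with S⁻¹ satisfies e_kᵀ S⁻¹ e_k ≤ A_{kk} / n_k. -/
open scoped Matrix

open Matrix

section helpers

variable {n : ℕ} {B : Finset (Fin n)}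

lemma restr_mulVec_apply (x : Fin n → ℝ) (b : {i // i ∈ B}) :
    (restr B *ᵥ x) b = x b := by
  simp [restr, Matrix.mulVec, dotProduct]

lemma restr_conj_apply (A : Matrix (Fin n) (Fin n) ℝ) (b b' : {i // i ∈ B}) :
    (restr B * A * (restr B)ᵀ) b b' = A b b' := by
  simp [restr, Matrix.mul_apply, Matrix.transpose_apply]

lemma transpose_restr_mulVec_apply (y : {i // i ∈ B} → ℝ) (b : {i // i ∈ B}) :
    ((restr B)ᵀ *ᵥ y) (b : Fin n) = y b := by
  simp [restr, Matrix.mulVec, dotProduct, Matrix.transpose_apply, ← Subtype.ext_iff, Finset.sum_ite_eq]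

lemma quad_conj {l m : Type*} [Fintype l] [Fintype m] (R : Matrix l m ℝ)
    (M : Matrix m m ℝ) (x : l → ℝ) :
    x ⬝ᵥ (R * M * Rᵀ) *ᵥ x = (Rᵀ *ᵥ x) ⬝ᵥ M *ᵥ (Rᵀ *ᵥ x) := by
  rw [← Matrix.mulVec_mulVec, ← Matrix.mulVec_mulVec, Matrix.dotProduct_mulVec,
    ← Matrix.mulVec_transpose]

lemma quad_conj' {l m : Type*} [Fintype l] [Fintype m] (R : Matrix m l ℝ)
    (M : Matrix m m ℝ) (x : l → ℝ) :
    x ⬝ᵥ (Rᵀ * M * R) *ᵥ x = (R *ᵥ x) ⬝ᵥ M *ᵥ (R *ᵥ x) := by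
  have := quad_conj Rᵀ M x
  rwa [Matrix.transpose_transpose] at this

end helpers

section csq

lemma csq {m : Type*} [Fintype m] [DecidableEq m] {M : Matrix m m ℝ} (hM : M.PosDef)
    (y : m → ℝ) (j : m) : (y j)^2 / M j j ≤ y ⬝ᵥ M⁻¹ *ᵥ y := by
  have hdet : IsUnit M.det := isUnit_iff_ne_zero.mpr hM.det_pos.ne'
  have hT : Mᵀ = M := by
    rw [← Matrix.conjTranspose_eq_transpose_of_trivial]; exact hM.1
  have hsingle : (Pi.single j 1 : m → ℝ) ≠ 0 := fun h => by simpa using congrFun h j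
  have hc : 0 < M j j := by
    have h := hM.dotProduct_mulVec_pos hsingle
    simpa [Matrix.mulVec_single, dotProduct_single] using h
  have hvm : ∀ z : m → ℝ, z ᵥ* M = M *ᵥ z := fun z => by
    conv_lhs => rw [← hT]
    rw [Matrix.vecMul_transpose]
  set c := M j j with hcdef
  set a := y j with hadef
  set w : m → ℝ := y - (a / c) • (M *ᵥ Pi.single j 1) with hw
  have h0 : 0 ≤ w ⬝ᵥ M⁻¹ *ᵥ w := by
    have := hM.inv.posSemidef.dotProduct_mulVec_nonneg w
    simpa using this
  have key1 : M⁻¹ *ᵥ (M *ᵥ Pi.single j 1) = Pi.single j 1 := by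
    rw [Matrix.mulVec_mulVec, Matrix.nonsing_inv_mul M hdet, Matrix.one_mulVec]
  have key2 : M *ᵥ (M⁻¹ *ᵥ y) = y := by
    rw [Matrix.mulVec_mulVec, Matrix.mul_nonsing_inv M hdet, Matrix.one_mulVec]
  have e1 : M⁻¹ *ᵥ w = (M⁻¹ *ᵥ y) - (a / c) • (Pi.single j 1 : m → ℝ) := by
    rw [hw, Matrix.mulVec_sub, Matrix.mulVec_smul, key1]
  have e3 : (M *ᵥ Pi.single j 1) ⬝ᵥ (M⁻¹ *ᵥ y) = a := by
    rw [dotProduct_comm, Matrix.dotProduct_mulVec, hvm, key2, dotProduct_single, mul_one]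
  have e4 : (M *ᵥ Pi.single j 1) ⬝ᵥ (Pi.single j 1 : m → ℝ) = c := by
    simp [dotProduct_single, Matrix.mulVec_single, hcdef]
  have e5 : y ⬝ᵥ (Pi.single j 1 : m → ℝ) = a := by
    rw [dotProduct_single, mul_one]
  have expand : w ⬝ᵥ M⁻¹ *ᵥ w = y ⬝ᵥ M⁻¹ *ᵥ y - a * a / c := by
    rw [e1, hw, sub_dotProduct, dotProduct_sub, dotProduct_sub,
      smul_dotProduct, smul_dotProduct, dotProduct_smul,
      dotProduct_smul, e3, e4, e5]
    simp only [smul_eq_mul]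
    field_simp
    ring
  rw [expand] at h0
  rw [pow_two]; linarith

end csq

section main

variable {n : ℕ}

lemma transpose_restr_mulVec_ne_zero {B : Finset (Fin n)} {y : {i // i ∈ B} → ℝ}
    (hy : y ≠ 0) : (restr B)ᵀ *ᵥ y ≠ 0 := by
  intro h
  apply hy
  funext b
  have := congrFun h (b : Fin n)
  simpa [transpose_restr_mulVec_apply] using this

lemma restr_conj_posDef {A : Matrix (Fin n) (Fin n) ℝ} (hA : A.PosDef)
    (B : Finset (Fin n)) : (restr B * A * (restr B)ᵀ).PosDef := by
  have hAT : Aᵀ = A := by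
    rw [← Matrix.conjTranspose_eq_transpose_of_trivial]; exact hA.1
  refine Matrix.PosDef.of_dotProduct_mulVec_pos ?_ ?_
  · rw [Matrix.IsHermitian, Matrix.conjTranspose_eq_transpose_of_trivial,
      Matrix.transpose_mul, Matrix.transpose_mul, Matrix.transpose_transpose, hAT,
      Matrix.mul_assoc]
  · intro y hy
    rw [star_trivial, quad_conj]
    have := hA.dotProduct_mulVec_pos (transpose_restr_mulVec_ne_zero hy)
    simpa using this

lemma sum_mulVec' {ι : Type*} (s : Finset ι) {m m' : Type*} [Fintype m] [Fintype m']
    (M : ι → Matrix m m' ℝ) (v : m' → ℝ) :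
    (∑ i ∈ s, M i) *ᵥ v = ∑ i ∈ s, M i *ᵥ v := by
  induction s using Finset.cons_induction with
  | empty => simp [Matrix.zero_mulVec]
  | cons a s ha ih => simp [Finset.sum_cons, Matrix.add_mulVec, ih]

lemma dotProduct_sum' {ι : Type*} (s : Finset ι) {m : Type*} [Fintype m]
    (x : m → ℝ) (f : ι → (m → ℝ)) :
    x ⬝ᵥ (∑ i ∈ s, f i) = ∑ i ∈ s, x ⬝ᵥ f i := by
  induction s using Finset.cons_induction with
  | empty => simp
  | cons a s ha ih => simp [Finset.sum_cons, dotProduct_add, ih]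

end main

/-- If the index `k` belongs to exactly `nk` blocks, then the Rayleigh quotient of the
standard basis vector `e_k` with `S⁻¹` is at most `A k k / nk`. -/
theorem stmt_5 {n : ℕ} (A : Matrix (Fin n) (Fin n) ℝ) (hA : A.PosDef)
    (𝓑 : Finset (Finset (Fin n))) (hcov : ∀ i : Fin n, ∃ B ∈ 𝓑, i ∈ B)
    (k : Fin n) (nk : ℕ) (hnk : (𝓑.filter (fun B => k ∈ B)).card = nk) (hpos : 0 < nk) :
    (Pi.single k 1 : Fin n → ℝ) ⬝ᵥ
        ((∑ B ∈ 𝓑, (restr B)ᵀ * (restr B * A * (restr B)ᵀ)⁻¹ * restr B)⁻¹ *ᵥ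
          (Pi.single k 1 : Fin n → ℝ)) ≤ A k k / nk := by
  classical
  set S : Matrix (Fin n) (Fin n) ℝ :=
      ∑ B ∈ 𝓑, (restr B)ᵀ * (restr B * A * (restr B)ᵀ)⁻¹ * restr B with hSdef
  have hquad : ∀ x : Fin n → ℝ, x ⬝ᵥ S *ᵥ x =
      ∑ B ∈ 𝓑, (restr B *ᵥ x) ⬝ᵥ (restr B * A * (restr B)ᵀ)⁻¹ *ᵥ (restr B *ᵥ x) := by
    intro x
    rw [hSdef, sum_mulVec', dotProduct_sum']
    exact Finset.sum_congr rfl fun B _ => quad_conj' (restr B) _ x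
  have hblockinv : ∀ B : Finset (Fin n), ((restr B * A * (restr B)ᵀ)⁻¹).PosDef :=
    fun B => (restr_conj_posDef hA B).inv
  have hterm_nonneg : ∀ (B : Finset (Fin n)) (x : Fin n → ℝ),
      0 ≤ (restr B *ᵥ x) ⬝ᵥ (restr B * A * (restr B)ᵀ)⁻¹ *ᵥ (restr B *ᵥ x) := by
    intro B x
    have := (hblockinv B).posSemidef.dotProduct_mulVec_nonneg (restr B *ᵥ x)
    simpa using this
  have hSpsd : S.PosSemidef := by
    rw [hSdef]
    refine Finset.sum_induction _ _ (fun a b ha hb => ha.add hb) Matrix.PosSemidef.zero ?_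
    intro B _
    have h := (hblockinv B).posSemidef.conjTranspose_mul_mul_same (restr B)
    rwa [Matrix.conjTranspose_eq_transpose_of_trivial] at h
  have hS : S.PosDef := by
    refine Matrix.PosDef.of_dotProduct_mulVec_pos hSpsd.1 (fun x hx => ?_)
    rw [star_trivial, hquad]
    obtain ⟨i, hi⟩ := Function.ne_iff.mp hx
    obtain ⟨B₀, hB₀, hiB₀⟩ := hcov i
    refine Finset.sum_pos' (fun B _ => hterm_nonneg B x) ⟨B₀, hB₀, ?_⟩
    have hne : restr B₀ *ᵥ x ≠ 0 := by
      intro h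
      apply hi
      have := congrFun h ⟨i, hiB₀⟩
      simpa [restr_mulVec_apply] using this
    have := (hblockinv B₀).dotProduct_mulVec_pos hne
    simpa using this
  have hdet : IsUnit S.det := isUnit_iff_ne_zero.mpr hS.det_pos.ne'
  have hsingle : (Pi.single k 1 : Fin n → ℝ) ≠ 0 := fun h => by simpa using congrFun h k
  set x : Fin n → ℝ := S⁻¹ *ᵥ Pi.single k 1 with hxdef
  set t : ℝ := (Pi.single k 1 : Fin n → ℝ) ⬝ᵥ x with htdef
  have ht_pos : 0 < t := by
    have := hS.inv.dotProduct_mulVec_pos hsingle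
    rw [star_trivial] at this
    exact this
  have hSx : S *ᵥ x = Pi.single k 1 := by
    rw [hxdef, Matrix.mulVec_mulVec, Matrix.mul_nonsing_inv S hdet, Matrix.one_mulVec]
  have hxk : x k = t := by
    rw [htdef, single_dotProduct, one_mul]
  have hq : x ⬝ᵥ S *ᵥ x = t := by
    rw [hSx, dotProduct_single, mul_one, hxk]
  have hAkk : 0 < A k k := by
    have := hA.dotProduct_mulVec_pos hsingle
    simpa [Matrix.mulVec_single, dotProduct_single] using this
  have hlow : (nk : ℝ) * (t ^ 2 / A k k) ≤ t := by
    have h1 : ∑ _B ∈ 𝓑.filter (fun B => k ∈ B), (x k ^ 2 / A k k) ≤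
        ∑ B ∈ 𝓑.filter (fun B => k ∈ B),
          (restr B *ᵥ x) ⬝ᵥ (restr B * A * (restr B)ᵀ)⁻¹ *ᵥ (restr B *ᵥ x) := by
      refine Finset.sum_le_sum fun B hB => ?_
      obtain ⟨hB𝓑, hkB⟩ := Finset.mem_filter.mp hB
      have h := csq (restr_conj_posDef hA B) (restr B *ᵥ x) ⟨k, hkB⟩
      rwa [restr_mulVec_apply, restr_conj_apply] at h
    have h2 : ∑ B ∈ 𝓑.filter (fun B => k ∈ B),
          (restr B *ᵥ x) ⬝ᵥ (restr B * A * (restr B)ᵀ)⁻¹ *ᵥ (restr B *ᵥ x) ≤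
        ∑ B ∈ 𝓑,
          (restr B *ᵥ x) ⬝ᵥ (restr B * A * (restr B)ᵀ)⁻¹ *ᵥ (restr B *ᵥ x) :=
      Finset.sum_le_sum_of_subset_of_nonneg (Finset.filter_subset _ _)
        (fun B _ _ => hterm_nonneg B x)
    have h3 : ∑ _B ∈ 𝓑.filter (fun B => k ∈ B), (x k ^ 2 / A k k)
        = (nk : ℝ) * (t ^ 2 / A k k) := by
      rw [Finset.sum_const, hnk, nsmul_eq_mul, hxk]
    calc (nk : ℝ) * (t ^ 2 / A k k) = _ := h3.symm
      _ ≤ _ := h1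
      _ ≤ _ := h2
      _ = x ⬝ᵥ S *ᵥ x := (hquad x).symm
      _ = t := hq
  have hnkpos : (0 : ℝ) < nk := by exact_mod_cast hpos
  have h4 : (nk : ℝ) * t ^ 2 ≤ t * A k k := by
    have := mul_le_mul_of_nonneg_right hlow hAkk.le
    rwa [mul_assoc, div_mul_cancel₀ _ hAkk.ne'] at this
  rw [le_div_iff₀ hnkpos]
  nlinarith [ht_pos, h4, hnkpos]
end
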